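/- For a nonnegative integer m, as q → 1, (m+1) ∑_{r=1}^{m+1} (−1)^r C(m,r−1)/(q^r−1) = −1/log q + B_{m+1}(log q)^m + O((log q)^{m+1}). -/

import Mathlib

open Asymptotics Filter Finset FormalMultilinearSeries
open scoped ENNReal NNReal

namespace Stmt9

/-- Custom scalar power series predicate. -/
def HasPS (f : ℝ → ℝ) (c : ℕ → ℝ) (r : ℝ) : Prop :=
  0 < r ∧ (Summable fun n => |c n| * r ^ n) ∧
    ∀ x : ℝ, |x| < r → HasSum (fun n => c n * x ^ n) (f x)

lemma HasPS.mono {f c r} (h : HasPS f c r) {r' : ℝ} (h0 : 0 < r') (hle : r' ≤ r) :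
    HasPS f c r' := by
  obtain ⟨hr, hs, hx⟩ := h
  refine ⟨h0, ?_, fun x hx' => hx x (hx'.trans_le hle)⟩
  refine Summable.of_nonneg_of_le (fun n => by positivity) (fun n => ?_) hs
  gcongr

lemma HasPS.hasFPowerSeriesAt {f c r} (h : HasPS f c r) :
    HasFPowerSeriesAt f (ofScalars ℝ c) 0 := by
  obtain ⟨hr, hs, hx⟩ := h
  refine ⟨ENNReal.ofReal r, ?_, by simpa using ENNReal.ofReal_pos.2 hr, ?_⟩
  · rw [ENNReal.ofReal]
    apply FormalMultilinearSeries.le_radius_of_summable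
    refine Summable.of_nonneg_of_le (fun n => by positivity) (fun n => ?_) hs
    rw [ofScalars_norm]
    have h2 : (r.toNNReal : ℝ) ^ n ≤ r ^ n := by
      have : (r.toNNReal : ℝ) ≤ r := by simp [Real.coe_toNNReal', hr.le]
      gcongr
    calc ‖c n‖ * (r.toNNReal : ℝ) ^ n ≤ ‖c n‖ * r ^ n := by
          gcongr
      _ = |c n| * r ^ n := by simp
  · intro y hy
    rw [EMetric.mem_ball, edist_dist, Real.dist_eq, sub_zero] at hy
    have hy' : |y| < r := by
      have := (ENNReal.ofReal_lt_ofReal_iff hr).1 hy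
      simpa using this
    have hsum := hx y hy'
    simp only [zero_add]
    have e : (fun n => c n * y ^ n) = fun n => ofScalars ℝ c n (fun _ => y) :=
      funext fun n => by rw [ofScalars_apply_eq, smul_eq_mul]
    rw [e] at hsum
    exact hsum

lemma hasPS_of_hasFPowerSeriesAt {f : ℝ → ℝ} {p : FormalMultilinearSeries ℝ ℝ ℝ}
    (h : HasFPowerSeriesAt f p 0) : ∃ r : ℝ, HasPS f p.coeff r := by
  obtain ⟨R, hball⟩ := h
  obtain ⟨r', hr'0, hr'R⟩ := ENNReal.lt_iff_exists_nnreal_btwn.1 hball.r_pos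
  have hr'rad : (r' : ℝ≥0∞) < p.radius := hr'R.trans_le hball.r_le
  have hr'pos : (0:ℝ) < r' := by exact_mod_cast hr'0
  refine ⟨r', hr'pos, ?_, ?_⟩
  · have hs := p.summable_norm_mul_pow hr'rad
    refine Summable.of_nonneg_of_le (fun n => by positivity) (fun n => ?_) hs
    have hc : |p.coeff n| ≤ ‖p n‖ := by
      rw [← Real.norm_eq_abs]
      calc ‖p n 1‖ ≤ ‖p n‖ * ∏ _i : Fin n, ‖(1:ℝ)‖ := (p n).le_opNorm 1
        _ = ‖p n‖ := by simp
    · gcongr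
  · intro x hx
    have hx' : x ∈ Metric.eball (0:ℝ) R := by
      rw [Metric.mem_eball, edist_dist, Real.dist_eq, sub_zero]
      calc ENNReal.ofReal |x| < ENNReal.ofReal r' := by
            apply (ENNReal.ofReal_lt_ofReal_iff hr'pos).2; simpa using hx
        _ = (r' : ℝ≥0∞) := by simp [ENNReal.ofReal_coe_nnreal]
        _ < R := hr'R
    have hsum := hball.hasSum hx'
    simp only [zero_add] at hsum
    have e : (fun n => p n (fun _ => x)) = fun n => p.coeff n * x ^ n :=
      funext fun n => by rw [FormalMultilinearSeries.apply_eq_pow_smul_coeff, smul_eq_mul]; ring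
    rw [e] at hsum
    exact hsum

lemma HasPS.unique {f g : ℝ → ℝ} {a b : ℕ → ℝ} {r s : ℝ}
    (hf : HasPS f a r) (hg : HasPS g b s) (hfg : f =ᶠ[nhds (0:ℝ)] g) : a = b := by
  have h1 := hf.hasFPowerSeriesAt
  have h2 := (hg.hasFPowerSeriesAt).congr hfg.symm
  have := h1.eq_formalMultilinearSeries h2
  exact (ofScalars_series_eq_iff ℝ a b).1 this

end Stmt9

namespace Stmt9

lemma hasSum_congr {f g : ℕ → ℝ} {a : ℝ} (h : ∀ n, f n = g n) (hf : HasSum f a) :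
    HasSum g a := (funext h : f = g) ▸ hf

lemma HasPS.const_mul {f c r} (a : ℝ) (h : HasPS f c r) :
    HasPS (fun x => a * f x) (fun n => a * c n) r := by
  obtain ⟨hr, hs, hx⟩ := h
  refine ⟨hr, ?_, fun x hx' => ?_⟩
  · apply (hs.mul_left |a|).congr
    intro n
    rw [abs_mul]; ring
  · exact hasSum_congr (fun n => by ring) ((hx x hx').mul_left a)

lemma HasPS.add {f g c d r} (hf : HasPS f c r) (hg : HasPS g d r) :
    HasPS (fun x => f x + g x) (fun n => c n + d n) r := by
  obtain ⟨hr, hs, hx⟩ := hf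
  obtain ⟨_, hs', hx'⟩ := hg
  refine ⟨hr, ?_, fun x hxr => ?_⟩
  · refine Summable.of_nonneg_of_le (fun n => by positivity) (fun n => ?_) (hs.add hs')
    have : |c n + d n| ≤ |c n| + |d n| := abs_add_le _ _
    calc |c n + d n| * r ^ n ≤ (|c n| + |d n|) * r ^ n := by gcongr
      _ = |c n| * r ^ n + |d n| * r ^ n := by ring
  · exact hasSum_congr (fun n => by ring) ((hx x hxr).add (hx' x hxr))

lemma hasPS_zero {r : ℝ} (hr : 0 < r) : HasPS (fun _ => 0) (fun _ => 0) r := by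
  refine ⟨hr, by simpa using summable_zero, fun x _ => by simpa using hasSum_zero⟩

lemma HasPS.sum {ι : Type*} (s : Finset ι) (f : ι → ℝ → ℝ) (c : ι → ℕ → ℝ) {r : ℝ} (hr : 0 < r)
    (h : ∀ i ∈ s, HasPS (f i) (c i) r) :
    HasPS (fun x => ∑ i ∈ s, f i x) (fun n => ∑ i ∈ s, c i n) r := by
  classical
  induction s using Finset.induction_on with
  | empty => simpa using hasPS_zero hr
  | insert i s hnot ih =>
    simp only [Finset.sum_insert hnot]
    exact (h i (Finset.mem_insert_self i s)).add
      (ih fun j hj => h j (Finset.mem_insert_of_mem hj))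

lemma HasPS.rescale {f c r} (h : HasPS f c r) (s : ℝ) :
    HasPS (fun x => f (s * x)) (fun n => s ^ n * c n) (r / (|s| + 1)) := by
  obtain ⟨hr, hs, hx⟩ := h
  have hs1 : (0:ℝ) < |s| + 1 := by positivity
  refine ⟨div_pos hr hs1, ?_, fun x hxr => ?_⟩
  · refine Summable.of_nonneg_of_le (fun n => by positivity) (fun n => ?_) hs
    have key : |s ^ n * c n| * (r / (|s| + 1)) ^ n = |c n| * (|s| * (r / (|s| + 1))) ^ n := by
      rw [abs_mul, abs_pow, mul_pow]; ring
    rw [key]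
    gcongr
    calc |s| * (r / (|s| + 1)) ≤ (|s| + 1) * (r / (|s| + 1)) := by
          gcongr; linarith
      _ = r := by field_simp
  · have hsx : |s * x| < r := by
      rw [abs_mul]
      calc |s| * |x| ≤ (|s| + 1) * |x| := by gcongr; linarith
        _ < (|s| + 1) * (r / (|s| + 1)) := by gcongr
        _ = r := by field_simp
    exact hasSum_congr (fun n => by rw [mul_pow]; ring) (hx (s * x) hsx)

lemma HasPS.mul {f g a b r} (hf : HasPS f a r) (hg : HasPS g b r) :
    HasPS (fun x => f x * g x) (fun n => ∑ k ∈ range (n + 1), a k * b (n - k)) r := by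
  obtain ⟨hr, hsa, hxa⟩ := hf
  obtain ⟨_, hsb, hxb⟩ := hg
  have hA : Summable fun n => ‖|a n| * r ^ n‖ := by
    apply hsa.abs.congr
    intro n
    rw [Real.norm_eq_abs]
  have hB : Summable fun n => ‖|b n| * r ^ n‖ := by
    apply hsb.abs.congr
    intro n
    rw [Real.norm_eq_abs]
  refine ⟨hr, ?_, fun x hxr => ?_⟩
  · have hC := (summable_norm_sum_mul_range_of_summable_norm hA hB).of_norm
    refine Summable.of_nonneg_of_le (fun n => by positivity) (fun n => ?_) hC
    calc |∑ k ∈ range (n + 1), a k * b (n - k)| * r ^ n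
        ≤ (∑ k ∈ range (n + 1), |a k * b (n - k)|) * r ^ n := by
          apply mul_le_mul_of_nonneg_right (Finset.abs_sum_le_sum_abs _ _) (by positivity)
      _ = ∑ k ∈ range (n + 1), |a k| * r ^ k * (|b (n - k)| * r ^ (n - k)) := by
          rw [Finset.sum_mul]
          refine Finset.sum_congr rfl fun k hk => ?_
          have hkn : k ≤ n := Nat.lt_succ_iff.1 (Finset.mem_range.1 hk)
          have hr' : r ^ k * r ^ (n - k) = r ^ n := by
            rw [← pow_add, Nat.add_sub_cancel' hkn]
          rw [abs_mul, ← hr']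
          ring
  · have s1 : Summable fun n => ‖a n * x ^ n‖ := by
      refine Summable.of_nonneg_of_le (fun n => norm_nonneg _) (fun n => ?_) hsa
      rw [Real.norm_eq_abs, abs_mul, abs_pow]
      exact mul_le_mul_of_nonneg_left (pow_le_pow_left₀ (abs_nonneg x) hxr.le n) (abs_nonneg _)
    have s2 : Summable fun n => ‖b n * x ^ n‖ := by
      refine Summable.of_nonneg_of_le (fun n => norm_nonneg _) (fun n => ?_) hsb
      rw [Real.norm_eq_abs, abs_mul, abs_pow]
      exact mul_le_mul_of_nonneg_left (pow_le_pow_left₀ (abs_nonneg x) hxr.le n) (abs_nonneg _)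
    have key := hasSum_sum_range_mul_of_summable_norm s1 s2
    rw [(hxa x hxr).tsum_eq, (hxb x hxr).tsum_eq] at key
    refine hasSum_congr (fun n => ?_) key
    rw [Finset.sum_mul]
    refine Finset.sum_congr rfl fun k hk => ?_
    have hkn : k ≤ n := Nat.lt_succ_iff.1 (Finset.mem_range.1 hk)
    have hx' : x ^ k * x ^ (n - k) = x ^ n := by
      rw [← pow_add, Nat.add_sub_cancel' hkn]
    rw [← hx']
    ring

end Stmt9

namespace Stmt9

noncomputable def uu (x : ℝ) : ℝ := if x = 0 then 1 else (Real.exp x - 1) / x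

noncomputable def gg (x : ℝ) : ℝ := (uu x)⁻¹

lemma uu_zero : uu 0 = 1 := if_pos rfl

lemma gg_zero : gg 0 = 1 := by simp [gg, uu_zero]

lemma hasPS_exp : HasPS Real.exp (fun n => 1 / (Nat.factorial n : ℝ)) 1 := by
  refine ⟨one_pos, ?_, fun x _ => ?_⟩
  · apply (Real.summable_pow_div_factorial 1).congr
    intro n
    simp only [one_pow, mul_one, one_div]
    rw [abs_of_nonneg (by positivity)]
  · rw [Real.exp_eq_exp_ℝ]
    refine hasSum_congr (fun n => ?_) (NormedSpace.expSeries_div_hasSum_exp x)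
    simp only [one_div]
    rw [div_eq_mul_inv, mul_comm]

/-- coefficients of `exp x - 1` -/
noncomputable def E1 (n : ℕ) : ℝ := if n = 0 then 0 else 1 / (Nat.factorial n : ℝ)

lemma hasPS_exp_sub_one : HasPS (fun x => Real.exp x - 1) E1 1 := by
  obtain ⟨h1, hsum, hx⟩ := hasPS_exp
  refine ⟨one_pos, ?_, fun x hxr => ?_⟩
  · refine Summable.of_nonneg_of_le (fun n => by positivity) (fun n => ?_) hsum
    have h1 : |E1 n| ≤ |1 / (Nat.factorial n : ℝ)| := by
      unfold E1
      split
      · simp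
      · exact le_refl _
    exact mul_le_mul_of_nonneg_right h1 (by positivity)
  · have h2 : HasSum (fun n : ℕ => if n = 0 then (1:ℝ) else 0) 1 := hasSum_ite_eq 0 1
    refine hasSum_congr (fun n => ?_) ((hx x hxr).sub h2)
    unfold E1
    rcases Nat.eq_zero_or_pos n with h | h
    · subst h; norm_num
    · have : n ≠ 0 := h.ne'
      simp [this]

lemma hasPS_uu : HasPS uu (fun n => 1 / (Nat.factorial (n+1) : ℝ)) 1 := by
  refine ⟨one_pos, ?_, fun x hxr => ?_⟩
  · refine Summable.of_nonneg_of_le (fun n => by positivity) (fun n => ?_) hasPS_exp.2.1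
    have h1 : |1 / (Nat.factorial (n+1) : ℝ)| ≤ |1 / (Nat.factorial n : ℝ)| := by
      rw [abs_of_nonneg (by positivity), abs_of_nonneg (by positivity)]
      apply one_div_le_one_div_of_le (by positivity)
      exact_mod_cast Nat.factorial_le (Nat.le_succ n)
    exact mul_le_mul_of_nonneg_right h1 (by positivity)
  · rcases eq_or_ne x 0 with h | h
    · subst h
      rw [uu_zero]
      refine hasSum_congr (fun n => ?_) (hasSum_ite_eq 0 (1:ℝ))
      rcases Nat.eq_zero_or_pos n with h | h
      · subst h; norm_num
      · have : n ≠ 0 := h.ne'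
        simp [this, zero_pow this]
    · obtain ⟨_, _, hx⟩ := hasPS_exp_sub_one
      have h1 := hx x hxr
      have h2 : HasSum (fun n => E1 (n + 1) * x ^ (n + 1)) (Real.exp x - 1) := by
        have := (hasSum_nat_add_iff' (f := fun n => E1 n * x ^ n) 1).2 h1
        simpa [E1] using this
      have h3 := h2.div_const x
      have : uu x = (Real.exp x - 1) / x := if_neg h
      rw [this]
      refine hasSum_congr (fun n => ?_) h3
      have : E1 (n + 1) = 1 / (Nat.factorial (n+1) : ℝ) := by simp [E1]
      rw [this, pow_succ]
      field_simp

lemma analyticAt_uu : AnalyticAt ℝ uu 0 := hasPS_uu.hasFPowerSeriesAt.analyticAt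

lemma analyticAt_gg : AnalyticAt ℝ gg 0 := by
  apply analyticAt_uu.inv
  rw [uu_zero]; exact one_ne_zero

lemma gg_mul_exp_sub_one : ∀ᶠ x in nhds (0:ℝ), gg x * (Real.exp x - 1) = x := by
  have hu : ContinuousAt uu 0 := analyticAt_uu.continuousAt
  have hne : ∀ᶠ x in nhds (0:ℝ), uu x ≠ 0 := by
    have : (1:ℝ) ≠ 0 := one_ne_zero
    have := hu.eventually_ne (by rw [uu_zero]; exact one_ne_zero)
    exact this
  filter_upwards [hne] with x hx
  rcases eq_or_ne x 0 with h | h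
  · subst h
    simp [Real.exp_zero]
  · have hux : uu x = (Real.exp x - 1) / x := if_neg h
    have hexp : Real.exp x - 1 ≠ 0 := by
      intro hE
      apply hx
      rw [hux, hE, zero_div]
    rw [gg, hux]
    field_simp

end Stmt9

namespace Stmt9

noncomputable def bcoef (n : ℕ) : ℝ := ((bernoulli n : ℚ) : ℝ) / (Nat.factorial n : ℝ)

lemma E1_zero : E1 0 = 0 := rfl

lemma E1_one : E1 1 = 1 := by norm_num [E1]

lemma bern_rec (n : ℕ) :
    ∑ k ∈ range (n + 1), bcoef k * E1 (n + 1 - k) = if n = 0 then 1 else 0 := by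
  have key := sum_bernoulli (n + 1)
  have keyR : ∑ k ∈ range (n + 1), (((n+1).choose k : ℝ)) * ((bernoulli k : ℚ) : ℝ)
      = if n = 0 then 1 else 0 := by
    have h := congrArg (fun q : ℚ => (q : ℝ)) key
    push_cast at h
    rcases eq_or_ne n 0 with h0 | h0
    · subst h0; simpa using h
    · rw [if_neg h0] at h
      rw [if_neg h0]
      exact_mod_cast h
  have hterm : ∀ k ∈ range (n + 1), bcoef k * E1 (n + 1 - k)
      = (((n+1).choose k : ℝ)) * ((bernoulli k : ℚ) : ℝ) / (Nat.factorial (n+1) : ℝ) := by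
    intro k hk
    have hkn : k ≤ n := Nat.lt_succ_iff.1 (Finset.mem_range.1 hk)
    have hne : n + 1 - k ≠ 0 := by omega
    have hE : E1 (n + 1 - k) = 1 / (Nat.factorial (n + 1 - k) : ℝ) := by simp [E1, hne]
    have hch : ((n+1).choose k * Nat.factorial k * Nat.factorial (n + 1 - k)) = Nat.factorial (n+1) :=
      Nat.choose_mul_factorial_mul_factorial (by omega)
    have hchR : (((n+1).choose k : ℝ)) * (Nat.factorial k : ℝ) * (Nat.factorial (n + 1 - k) : ℝ)
        = (Nat.factorial (n+1) : ℝ) := by exact_mod_cast hch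
    rw [hE, bcoef]
    have hk0 : (Nat.factorial k : ℝ) ≠ 0 := by positivity
    have hk1 : (Nat.factorial (n + 1 - k) : ℝ) ≠ 0 := by positivity
    have hk2 : (Nat.factorial (n + 1) : ℝ) ≠ 0 := by positivity
    have hc0 : (((n+1).choose k : ℕ) : ℝ) ≠ 0 := by
      have := Nat.choose_pos (show k ≤ n + 1 by omega)
      positivity
    rw [← hchR]
    field_simp
  rw [Finset.sum_congr rfl hterm, ← Finset.sum_div, keyR]
  rcases eq_or_ne n 0 with h0 | h0
  · subst h0; norm_num
  · simp [h0]

lemma hasPS_id : HasPS (fun x => x) (fun n => if n = 1 then (1:ℝ) else 0) 1 := by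
  refine ⟨one_pos, ?_, fun x hxr => ?_⟩
  · apply summable_of_ne_finset_zero (s := {1})
    intro n hn
    simp only [Finset.mem_singleton] at hn
    simp [hn]
  · refine hasSum_congr (fun n => ?_) (hasSum_ite_eq 1 x)
    split
    · rename_i h; subst h; simp
    · simp [*]

lemma exists_ggPS : ∃ ρ, HasPS gg bcoef ρ := by
  obtain ⟨p, hp⟩ := analyticAt_gg
  obtain ⟨ρ, hPS⟩ := hasPS_of_hasFPowerSeriesAt hp
  set c := p.coeff with hc
  have hρ := hPS.1
  have hρ' : 0 < min ρ 1 := lt_min hρ one_pos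
  have hmul := (hPS.mono hρ' (min_le_left _ _)).mul
    (hasPS_exp_sub_one.mono hρ' (min_le_right _ _))
  have huniq : (fun n => ∑ k ∈ range (n + 1), c k * E1 (n - k))
      = fun n => if n = 1 then (1:ℝ) else 0 :=
    HasPS.unique hmul hasPS_id gg_mul_exp_sub_one
  have hcoef : ∀ n, c n = bcoef n := by
    intro n
    induction n using Nat.strong_induction_on with
    | _ n ih =>
      have h1 := congrFun huniq (n + 1)
      rw [Finset.sum_range_succ, Finset.sum_range_succ] at h1
      have h2 := bern_rec n
      rw [Finset.sum_range_succ] at h2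
      have h3 : ∑ k ∈ range n, c k * E1 (n + 1 - k)
          = ∑ k ∈ range n, bcoef k * E1 (n + 1 - k) :=
        Finset.sum_congr rfl fun k hk => by rw [ih k (Finset.mem_range.1 hk)]
      have e0 : n + 1 - (n + 1) = 0 := by omega
      have e1 : n + 1 - n = 1 := by omega
      rw [e0, e1, E1_zero, E1_one] at h1
      rw [e1, E1_one] at h2
      have hδ : (if n + 1 = 1 then (1:ℝ) else 0) = if n = 0 then (1:ℝ) else 0 := by
        rcases eq_or_ne n 0 with h | h
        · subst h; norm_num
        · have : n + 1 ≠ 1 := by omega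
          simp [h, this]
      rw [hδ] at h1
      rw [h3] at h1
      linarith [h1, h2]
  exact ⟨ρ, (funext hcoef : c = bcoef) ▸ hPS⟩

end Stmt9

namespace Stmt9

open PowerSeries

lemma altSum (n k : ℕ) (hk : k ≤ n) :
    ∑ r ∈ range (n + 1), (-1:ℝ) ^ r * (n.choose r : ℝ) * (r : ℝ) ^ k
      = if k = n then (-1 : ℝ) ^ n * (Nat.factorial n : ℝ) else 0 := by
  classical
  set U : PowerSeries ℝ := PowerSeries.mk fun j => (1:ℝ)/(Nat.factorial (j+1)) with hU
  have hXU : (PowerSeries.X : PowerSeries ℝ) * U = PowerSeries.exp ℝ - 1 := by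
    ext j
    cases j with
    | zero =>
      simp [PowerSeries.coeff_zero_eq_constantCoeff, map_mul, PowerSeries.coeff_exp]
    | succ j =>
      rw [PowerSeries.coeff_succ_X_mul, map_sub, PowerSeries.coeff_exp]
      have : (PowerSeries.coeff (R := ℝ) (j+1)) 1 = 0 := by
        rw [PowerSeries.coeff_one]
        simp
      rw [this, sub_zero, hU, PowerSeries.coeff_mk]
      rw [eq_ratCast (algebraMap ℚ ℝ)]
      push_cast
      norm_num
  have hCneg : ∀ r : ℕ, (PowerSeries.C (R := ℝ)) ((-1:ℝ) ^ r) = (-1 : PowerSeries ℝ) ^ r := by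
    intro r
    rw [map_pow, map_neg, map_one]
  have h2 : (1 : PowerSeries ℝ) - PowerSeries.exp ℝ = -(PowerSeries.X * U) := by
    rw [hXU]; ring
  have hLHS : (PowerSeries.coeff (R := ℝ) k) ((1 - PowerSeries.exp ℝ) ^ n)
      = if k = n then (-1:ℝ) ^ n else 0 := by
    have h1 : (1 - PowerSeries.exp ℝ) ^ n
        = ((-1:ℝ) ^ n) • ((PowerSeries.X : PowerSeries ℝ) ^ n * U ^ n) := by
      rw [h2, neg_pow, mul_pow, PowerSeries.smul_eq_C_mul, hCneg]
    rw [h1, map_smul, smul_eq_mul]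
    rcases eq_or_ne k n with he | he
    · subst he
      rw [if_pos rfl]
      have h3 := PowerSeries.coeff_X_pow_mul (U ^ k) k 0
      rw [zero_add] at h3
      rw [h3]
      have h4 : (PowerSeries.coeff (R := ℝ) 0) (U ^ k) = 1 := by
        rw [PowerSeries.coeff_zero_eq_constantCoeff, map_pow]
        have : (PowerSeries.constantCoeff (R := ℝ)) U = 1 := by
          rw [hU, ← PowerSeries.coeff_zero_eq_constantCoeff, PowerSeries.coeff_mk]
          norm_num
        rw [this, one_pow]
      rw [h4, mul_one]
    · rw [if_neg he]
      have hdvd : (PowerSeries.X : PowerSeries ℝ) ^ n ∣ PowerSeries.X ^ n * U ^ n :=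
        ⟨U ^ n, rfl⟩
      have h0 := PowerSeries.X_pow_dvd_iff.1 hdvd k (lt_of_le_of_ne hk he)
      rw [h0, mul_zero]
  have hRHS : (PowerSeries.coeff (R := ℝ) k) ((1 - PowerSeries.exp ℝ) ^ n)
      = ∑ r ∈ range (n + 1),
          (-1:ℝ) ^ r * (n.choose r : ℝ) * ((r:ℝ) ^ k * ((1:ℝ) / (Nat.factorial k : ℝ))) := by
    have hsub : (1 : PowerSeries ℝ) - PowerSeries.exp ℝ = -(PowerSeries.exp ℝ) + 1 := by ring
    rw [hsub, add_pow, map_sum]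
    refine Finset.sum_congr rfl fun r hr => ?_
    rw [one_pow, mul_one]
    have hterm : (-(PowerSeries.exp ℝ)) ^ r * ((n.choose r : ℕ) : PowerSeries ℝ)
        = ((-1:ℝ) ^ r * (n.choose r : ℝ)) •
            (PowerSeries.rescale ((r:ℕ) : ℝ) (PowerSeries.exp ℝ)) := by
      rw [neg_pow, PowerSeries.exp_pow_eq_rescale_exp]
      rw [← map_natCast (PowerSeries.C (R := ℝ)) (n.choose r), PowerSeries.smul_eq_C_mul, map_mul, hCneg]
      ring
    rw [hterm, map_smul, smul_eq_mul, PowerSeries.coeff_rescale, PowerSeries.coeff_exp]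
    rw [eq_ratCast (algebraMap ℚ ℝ)]
    push_cast
    ring
  have hk0 : (Nat.factorial k : ℝ) ≠ 0 := by positivity
  have hmain := hLHS.symm.trans hRHS
  rcases eq_or_ne k n with he | he
  · rw [if_pos he]
    rw [if_pos he] at hmain
    have h5 : (∑ r ∈ range (n + 1),
          (-1:ℝ) ^ r * (n.choose r : ℝ) * ((r:ℝ) ^ k * ((1:ℝ) / (Nat.factorial k : ℝ))))
          * (Nat.factorial k : ℝ)
        = ∑ r ∈ range (n + 1), (-1:ℝ) ^ r * (n.choose r : ℝ) * (r:ℝ) ^ k := by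
      rw [Finset.sum_mul]
      refine Finset.sum_congr rfl fun r hr => ?_
      field_simp
    rw [← h5, ← hmain, he]
  · rw [if_neg he]
    rw [if_neg he] at hmain
    have : ∑ r ∈ range (n+1), (-1:ℝ)^r * (n.choose r:ℝ) * (r:ℝ)^k
        = (∑ r ∈ range (n + 1),
          (-1:ℝ) ^ r * (n.choose r : ℝ) * ((r:ℝ) ^ k * ((1:ℝ) / (Nat.factorial k : ℝ))))
          * (Nat.factorial k : ℝ) := by
      rw [Finset.sum_mul]
      refine Finset.sum_congr rfl fun r hr => ?_
      field_simp
    rw [this, ← hmain, zero_mul]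

end Stmt9

namespace Stmt9

lemma hasPS_htil (m : ℕ) : ∃ (ρ : ℝ) (c : ℕ → ℝ), 0 < ρ ∧
    HasPS (fun x => ∑ r ∈ range (m+2), (-1:ℝ)^r * (((m+1).choose r : ℕ) : ℝ) * gg ((r:ℝ) * x)) c ρ ∧
    (∀ k, k ≤ m → c k = 0) ∧ c (m+1) = ((bernoulli' (m+1) : ℚ) : ℝ) := by
  obtain ⟨ρg, hg⟩ := exists_ggPS
  have hρg : 0 < ρg := hg.1
  set ρ0 : ℝ := ρg / (m + 2) with hρ0
  have hρ0pos : 0 < ρ0 := by positivity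
  have hterm : ∀ r ∈ range (m + 2),
      HasPS (fun x => (-1:ℝ)^r * (((m+1).choose r : ℕ) : ℝ) * gg ((r:ℝ) * x))
        (fun n => (-1:ℝ)^r * (((m+1).choose r : ℕ) : ℝ) * ((r:ℝ)^n * bcoef n)) ρ0 := by
    intro r hr
    have hrm : (r : ℝ) ≤ m + 1 := by
      have := Nat.lt_succ_iff.1 (Finset.mem_range.1 hr)
      exact_mod_cast this
    have h1 := (hg.rescale (r:ℝ)).const_mul ((-1:ℝ)^r * (((m+1).choose r : ℕ) : ℝ))
    have h2 : ρ0 ≤ ρg / (|(r:ℝ)| + 1) := by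
      rw [hρ0]
      apply div_le_div_of_nonneg_left hρg.le ?_ ?_
      · positivity
      · rw [abs_of_nonneg (by positivity : (0:ℝ) ≤ (r:ℝ))]
        linarith
    have h3 := h1.mono hρ0pos h2
    refine ⟨h3.1, h3.2.1, fun x hx => ?_⟩
    refine hasSum_congr (fun n => by ring) (h3.2.2 x hx)
  have hsum := HasPS.sum (range (m+2)) _ _ hρ0pos hterm
  refine ⟨ρ0, (fun n => ∑ r ∈ range (m+2),
    (-1:ℝ)^r * (((m+1).choose r : ℕ) : ℝ) * ((r:ℝ)^n * bcoef n)), hρ0pos, ?_, ?_, ?_⟩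
  · refine ⟨hsum.1, hsum.2.1, fun x hx => ?_⟩
    exact hasSum_congr (fun n => rfl) (hsum.2.2 x hx)
  · intro k hk
    have hfac : ∑ r ∈ range (m+2), (-1:ℝ)^r * (((m+1).choose r : ℕ) : ℝ) * ((r:ℝ)^k * bcoef k)
        = (∑ r ∈ range (m+2), (-1:ℝ)^r * (((m+1).choose r : ℕ) : ℝ) * (r:ℝ)^k) * bcoef k := by
      rw [Finset.sum_mul]
      exact Finset.sum_congr rfl fun r _ => by ring
    have halt := altSum (m+1) k (by omega)
    rw [if_neg (by omega : ¬ k = m + 1)] at halt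
    simp only [hfac, halt, zero_mul]
  · have hfac : ∑ r ∈ range (m+2), (-1:ℝ)^r * (((m+1).choose r : ℕ) : ℝ) * ((r:ℝ)^(m+1) * bcoef (m+1))
        = (∑ r ∈ range (m+2), (-1:ℝ)^r * (((m+1).choose r : ℕ) : ℝ) * (r:ℝ)^(m+1)) * bcoef (m+1) := by
      rw [Finset.sum_mul]
      exact Finset.sum_congr rfl fun r _ => by ring
    have halt := altSum (m+1) (m+1) le_rfl
    rw [if_pos rfl] at halt
    simp only [hfac, halt]
    rw [bcoef]
    have hb : (bernoulli (m+1) : ℚ) = (-1)^(m+1) * bernoulli' (m+1) := rfl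
    have hfne : (Nat.factorial (m+1) : ℝ) ≠ 0 := by positivity
    rw [hb]
    push_cast
    field_simp
    have h2 : (-1:ℝ)^(m+1) * (-1:ℝ)^(m+1) = 1 := by
      rw [← pow_add]
      exact Even.neg_one_pow ⟨m+1, by ring⟩
    linear_combination ((bernoulli' (m+1) : ℚ) : ℝ) * h2

end Stmt9

namespace Stmt9

lemma central (m : ℕ) :
    (fun x : ℝ => (∑ r ∈ range (m+2), (-1:ℝ)^r * (((m+1).choose r : ℕ) : ℝ) * gg ((r:ℝ) * x))
        - ((bernoulli' (m+1) : ℚ) : ℝ) * x ^ (m+1))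
      =O[nhds (0:ℝ)] fun x => x ^ (m + 2) := by
  obtain ⟨ρ, c, hρ, hPS, hk0, hk1⟩ := hasPS_htil m
  have hb := hPS.hasFPowerSeriesAt.isBigO_sub_partialSum_pow (m+2)
  simp only [zero_add] at hb
  have hps : ∀ y : ℝ, (ofScalars ℝ c).partialSum (m+2) y
      = ((bernoulli' (m+1) : ℚ) : ℝ) * y ^ (m+1) := by
    intro y
    rw [FormalMultilinearSeries.partialSum]
    rw [Finset.sum_eq_single (m+1)]
    · rw [ofScalars_apply_eq, hk1, smul_eq_mul, mul_comm]
    · intro k hk hne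
      have hk' : k ≤ m := by
        have := Finset.mem_range.1 hk
        omega
      rw [ofScalars_apply_eq, hk0 k hk', zero_smul]
    · intro h
      exact absurd (Finset.self_mem_range_succ (m+1)) h
  have hb2 : (fun y : ℝ => (∑ r ∈ range (m+2), (-1:ℝ)^r * (((m+1).choose r : ℕ) : ℝ) * gg ((r:ℝ) * y))
      - ((bernoulli' (m+1) : ℚ) : ℝ) * y ^ (m+1)) =O[nhds (0:ℝ)] fun y => ‖y‖ ^ (m + 2) := by
    refine hb.congr' ?_ (Filter.EventuallyEq.refl _ _)
    filter_upwards with y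
    rw [hps]
  have h3 : (fun y : ℝ => ‖y‖ ^ (m + 2)) = fun y : ℝ => ‖y ^ (m + 2)‖ := by
    funext y
    rw [norm_pow]
  rw [h3] at hb2
  exact hb2.of_norm_right

lemma exp_rx_ne_one {r : ℕ} (hr : 1 ≤ r) {x : ℝ} (hx : x < 0) :
    Real.exp ((r:ℝ) * x) - 1 ≠ 0 := by
  have hrx : (r:ℝ) * x < 0 := by
    apply mul_neg_of_pos_of_neg _ hx
    exact_mod_cast hr
  have := Real.exp_lt_one_iff.2 hrx
  linarith

lemma gg_eq {r : ℕ} (hr : 1 ≤ r) {x : ℝ} (hx : x < 0) :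
    gg ((r:ℝ) * x) = ((r:ℝ) * x) / (Real.exp ((r:ℝ) * x) - 1) := by
  have hrx : (r:ℝ) * x < 0 := by
    apply mul_neg_of_pos_of_neg _ hx
    exact_mod_cast hr
  have hne : (r:ℝ) * x ≠ 0 := ne_of_lt hrx
  have huu : uu ((r:ℝ) * x) = (Real.exp ((r:ℝ) * x) - 1) / ((r:ℝ) * x) := if_neg hne
  rw [gg, huu, inv_div]

lemma term_eq (m r : ℕ) (hr : 1 ≤ r) {x : ℝ} (hx : x < 0) :
    ((m:ℝ)+1) * ((-1:ℝ)^r * (m.choose (r-1) : ℝ) / (Real.exp ((r:ℝ)*x) - 1))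
      = ((-1:ℝ)^r * (((m+1).choose r : ℕ) : ℝ) * gg ((r:ℝ)*x)) * x⁻¹ := by
  have hexp := exp_rx_ne_one hr hx
  have hgg := gg_eq hr hx
  have hch : ((m:ℝ)+1) * (m.choose (r-1) : ℝ) = (((m+1).choose r : ℕ) : ℝ) * (r:ℝ) := by
    have h := Nat.add_one_mul_choose_eq m (r-1)
    have hr' : r - 1 + 1 = r := Nat.succ_pred_eq_of_pos hr
    simp only [Nat.succ_eq_add_one, hr'] at h
    exact_mod_cast h
  have hx0 : x ≠ 0 := ne_of_lt hx
  rw [hgg]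
  field_simp
  linear_combination hch

end Stmt9

namespace Stmt9

lemma xside (m : ℕ) :
    (fun x : ℝ => ((m:ℝ)+1) * ∑ r ∈ Finset.Icc 1 (m+1),
          (-1:ℝ)^r * (m.choose (r-1) : ℝ) / (Real.exp ((r:ℝ)*x) - 1)
        - (-1/x + ((bernoulli' (m+1):ℚ):ℝ) * x ^ m))
      =O[nhdsWithin (0:ℝ) (Set.Iio 0)] fun x => x ^ (m+1) := by
  have hc := (central m).mono (nhdsWithin_le_nhds (s := Set.Iio (0:ℝ)))
  have hinv : (fun x:ℝ => x⁻¹) =O[nhdsWithin (0:ℝ) (Set.Iio 0)] fun x => x⁻¹ :=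
    isBigO_refl _ _
  have hmul := hc.mul hinv
  refine hmul.congr' ?_ ?_
  · filter_upwards [self_mem_nhdsWithin] with x hx
    have hxneg : x < 0 := hx
    have hx0 : x ≠ 0 := ne_of_lt hxneg
    have hne0 : (0:ℕ) ∉ Finset.Icc 1 (m+1) := by simp
    have hins : insert 0 (Finset.Icc 1 (m+1)) = range (m+2) := by
      ext a
      simp only [Finset.mem_insert, Finset.mem_Icc, Finset.mem_range]
      omega
    have key : ((m:ℝ)+1) * ∑ r ∈ Finset.Icc 1 (m+1),
          (-1:ℝ)^r * (m.choose (r-1) : ℝ) / (Real.exp ((r:ℝ)*x) - 1)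
        = (∑ r ∈ Finset.Icc 1 (m+1),
            (-1:ℝ)^r * (((m+1).choose r : ℕ) : ℝ) * gg ((r:ℝ)*x)) * x⁻¹ := by
      rw [Finset.mul_sum, Finset.sum_mul]
      refine Finset.sum_congr rfl fun r hr => ?_
      exact term_eq m r (Finset.mem_Icc.1 hr).1 hxneg
    have hsplit : ∑ r ∈ range (m+2), (-1:ℝ)^r * (((m+1).choose r : ℕ) : ℝ) * gg ((r:ℝ) * x)
        = 1 + ∑ r ∈ Finset.Icc 1 (m+1), (-1:ℝ)^r * (((m+1).choose r : ℕ) : ℝ) * gg ((r:ℝ) * x) := by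
      rw [← hins, Finset.sum_insert hne0]
      congr 1
      simp [gg_zero]
    show (∑ r ∈ range (m+2), (-1:ℝ)^r * (((m+1).choose r : ℕ) : ℝ) * gg ((r:ℝ) * x)
        - ((bernoulli' (m+1):ℚ):ℝ) * x ^ (m+1)) * x⁻¹
      = ((m:ℝ)+1) * ∑ r ∈ Finset.Icc 1 (m+1),
          (-1:ℝ)^r * (m.choose (r-1) : ℝ) / (Real.exp ((r:ℝ)*x) - 1)
        - (-1/x + ((bernoulli' (m+1):ℚ):ℝ) * x ^ m)
    rw [hsplit, key]
    field_simp
    ring_nf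
    simp only [mul_comm x]
  · filter_upwards [self_mem_nhdsWithin] with x hx
    have hx0 : x ≠ 0 := ne_of_lt hx
    show x ^ (m+2) * x⁻¹ = x ^ (m+1)
    rw [pow_succ]
    field_simp

end Stmt9

theorem stmt_9 (m : ℕ) :
    (fun q : ℝ =>
        ((m : ℝ) + 1) *
            ∑ r ∈ Finset.Icc 1 (m + 1), (-1 : ℝ) ^ r * (m.choose (r - 1) : ℝ) / (q ^ r - 1)
          - (-1 / Real.log q + ((bernoulli' (m + 1) : ℚ) : ℝ) * Real.log q ^ m))
      =O[nhdsWithin 1 (Set.Ioo 0 1)] fun q : ℝ => Real.log q ^ (m + 1) := by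
  have hx := Stmt9.xside m
  have hlog : Filter.Tendsto Real.log (nhdsWithin 1 (Set.Ioo 0 1))
      (nhdsWithin (0:ℝ) (Set.Iio 0)) := by
    apply tendsto_nhdsWithin_of_tendsto_nhds_of_eventually_within
    · have h1 : Filter.Tendsto Real.log (nhds 1) (nhds (Real.log 1)) :=
        (Real.continuousAt_log one_ne_zero).tendsto
      rw [Real.log_one] at h1
      exact h1.mono_left nhdsWithin_le_nhds
    · filter_upwards [self_mem_nhdsWithin] with q hq
      exact Real.log_neg hq.1 hq.2
  have hcomp := hx.comp_tendsto hlog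
  refine hcomp.congr' ?_ ?_
  · filter_upwards [self_mem_nhdsWithin] with q hq
    have hq0 : (0:ℝ) < q := hq.1
    have hqr : ∀ r : ℕ, Real.exp ((r:ℝ) * Real.log q) = q ^ r := by
      intro r
      rw [Real.exp_nat_mul, Real.exp_log hq0]
    show ((m:ℝ)+1) * ∑ r ∈ Finset.Icc 1 (m+1),
          (-1:ℝ)^r * (m.choose (r-1) : ℝ) / (Real.exp ((r:ℝ) * Real.log q) - 1)
        - (-1 / Real.log q + ((bernoulli' (m+1):ℚ):ℝ) * Real.log q ^ m)
      = ((m : ℝ) + 1) *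
            ∑ r ∈ Finset.Icc 1 (m + 1), (-1 : ℝ) ^ r * (m.choose (r - 1) : ℝ) / (q ^ r - 1)
          - (-1 / Real.log q + ((bernoulli' (m + 1) : ℚ) : ℝ) * Real.log q ^ m)
    rw [Finset.sum_congr rfl (fun r _ => by rw [hqr r])]
  · exact Filter.Eventually.of_forall fun q => rfl
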